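/- The union Z_ω(U_2) = ⋃_{k≥0} Z_k(U_2) of the (finite-index) terms of the upper central series of U_2 equals the commutator subgroup [U_2, U_2], and both equal { (x + f(y), y) : f(y) ∈ K⟨y⟩ }. -/

import Mathlib

/- STATEMENT 8: the union Z_ω(U₂) = ⋃_{k≥0} Z_k(U₂) of the finite terms of the
   upper central series of U₂ equals the commutator subgroup [U₂,U₂], and both
   equal { (x + f(y), y) : f ∈ K⟨y⟩ }.  Here x = ι K 0, y = ι K 1. -/

noncomputable section
open FreeAlgebra

abbrev A2 (K : Type) [Field K] := FreeAlgebra K (Fin 2)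

private lemma adjoin_stable {K : Type} [Field K]
    (φ : A2 K ≃ₐ[K] A2 K) (b : K)
    (hy : φ (ι K 1) = ι K 1 + algebraMap K (A2 K) b) :
    ∀ u ∈ Algebra.adjoin K ({ι K 1} : Set (A2 K)),
      φ u ∈ Algebra.adjoin K ({ι K 1} : Set (A2 K)) := by
  intro u hu
  induction hu using Algebra.adjoin_induction with
  | mem v hv =>
      rcases hv with rfl
      rw [hy]
      exact add_mem (Algebra.self_mem_adjoin_singleton K _) (Subalgebra.algebraMap_mem _ _)
  | algebraMap r => rw [AlgEquiv.commutes]; exact Subalgebra.algebraMap_mem _ _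
  | add u v _ _ hu hv => rw [map_add]; exact add_mem hu hv
  | mul u v _ _ hu hv => rw [map_mul]; exact mul_mem hu hv

/-- The group `U₂` of unitriangular automorphisms of the free associative algebra
`A₂ = K⟨x,y⟩` (with `x = ι K 0`, `y = ι K 1`): automorphisms sending
`x ↦ x + f(y)`, `y ↦ y + b·1` with `f ∈ K⟨y⟩`, `b ∈ K`. -/
def U2 (K : Type) [Field K] : Subgroup (A2 K ≃ₐ[K] A2 K) where
  carrier := {φ | ∃ f ∈ Algebra.adjoin K ({ι K 1} : Set (A2 K)), ∃ b : K,
    φ (ι K 0) = ι K 0 + f ∧ φ (ι K 1) = ι K 1 + algebraMap K (A2 K) b}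
  one_mem' := ⟨0, Subalgebra.zero_mem _, 0, by simp, by simp⟩
  mul_mem' := by
    rintro φ ψ ⟨f, hf, b, hfx, hfy⟩ ⟨h, hh, c, hhx, hhy⟩
    refine ⟨f + φ h, add_mem hf (adjoin_stable φ b hfy h hh), b + c, ?_, ?_⟩
    · show φ (ψ (ι K 0)) = _
      rw [hhx, map_add, hfx, add_assoc]
    · show φ (ψ (ι K 1)) = _
      rw [hhy, map_add, hfy, AlgEquiv.commutes, map_add, add_assoc]
  inv_mem' := by
    rintro φ ⟨f, hf, b, hfx, hfy⟩
    have hsy : φ.symm (ι K 1) = ι K 1 + algebraMap K (A2 K) (-b) := by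
      have h1 := congrArg φ.symm hfy
      rw [AlgEquiv.symm_apply_apply, map_add, AlgEquiv.commutes] at h1
      rw [eq_sub_of_add_eq h1.symm, map_neg, sub_eq_add_neg]
    have hsx : φ.symm (ι K 0) = ι K 0 + (-(φ.symm f)) := by
      have h1 := congrArg φ.symm hfx
      rw [AlgEquiv.symm_apply_apply, map_add] at h1
      rw [eq_sub_of_add_eq h1.symm, sub_eq_add_neg]
    exact ⟨-(φ.symm f), neg_mem (adjoin_stable φ.symm (-b) hsy f hf), -b, hsx, hsy⟩


open Polynomial
open scoped commutatorElement

section PolyAux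
variable {K : Type} [Field K]

private noncomputable def qq (b : K) (m : ℕ) : K[X] :=
  ∏ i ∈ Finset.range m, (X + C ((i : K) * b))

private lemma taylor_qq (b : K) (m : ℕ) :
    taylor b (qq b m) = ∏ i ∈ Finset.range m, (X + C (((i : K) + 1) * b)) := by
  show taylorAlgHom b (qq b m) = _
  rw [qq, map_prod]
  refine Finset.prod_congr rfl fun i _ => ?_
  rw [taylorAlgHom_apply, map_add, taylor_X, taylor_C, add_assoc, ← C_add]
  congr 1
  ring_nf

private lemma qq_natDegree (b : K) (m : ℕ) : (qq b m).natDegree = m := by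
  rw [qq, natDegree_prod]
  · have h : ∀ i ∈ Finset.range m, (X + C ((i : K) * b)).natDegree = 1 :=
      fun i _ => natDegree_X_add_C _
    rw [Finset.sum_congr rfl h]
    simp
  · intro i _
    exact (monic_X_add_C _).ne_zero

private lemma taylor_qq_sub (b : K) (m : ℕ) :
    taylor b (qq b (m + 1)) - qq b (m + 1) = (((m : K) + 1) * b) • taylor b (qq b m) := by
  rw [taylor_qq, taylor_qq, qq, Finset.prod_range_succ, Finset.prod_range_succ']
  push_cast
  simp only [zero_mul, map_zero, add_zero]
  rw [smul_eq_C_mul]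
  ring

private noncomputable def dOp (b : K) : Module.End K K[X] :=
  (taylor b : K[X] →ₗ[K] K[X]) - LinearMap.id

private lemma dOp_apply (b : K) (p : K[X]) : dOp b p = taylor b p - p := rfl

private lemma dOp_pow_qq (b : K) : ∀ k : ℕ, ((dOp b) ^ k) (qq b k) = ((k.factorial : K) * b ^ k) • 1
  | 0 => by simp [qq]
  | (k + 1) => by
    rw [pow_succ, Module.End.mul_apply, dOp_apply, taylor_qq_sub, map_smul]
    have hc : Commute ((dOp b) ^ k) ((taylor b : K[X] →ₗ[K] K[X]) : Module.End K K[X]) :=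
      (((Commute.refl ((taylor b : K[X] →ₗ[K] K[X]) : Module.End K K[X])).sub_left
        (Commute.one_left _))).pow_left k
    have h2 : ((dOp b) ^ k) (taylor b (qq b k)) = taylor b (((dOp b) ^ k) (qq b k)) := by
      have := LinearMap.congr_fun hc.eq (qq b k)
      simpa [Module.End.mul_apply] using this
    rw [h2, dOp_pow_qq b k, map_smul, smul_smul]
    have h3 : taylor b (1 : K[X]) = 1 := by rw [taylor_one, C_1]
    rw [h3]
    congr 1
    push_cast [Nat.factorial_succ]
    ring

private lemma dOp_pow_qq_ne_zero [CharZero K] {b : K} (hb : b ≠ 0) (k : ℕ) :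
    ((dOp b) ^ k) (qq b k) ≠ 0 := by
  rw [dOp_pow_qq]
  exact smul_ne_zero
    (mul_ne_zero (Nat.cast_ne_zero.mpr k.factorial_ne_zero) (pow_ne_zero _ hb)) one_ne_zero

private lemma taylor_coeff_natDegree' (c : K) (p : K[X]) :
    (taylor c p).coeff p.natDegree = p.coeff p.natDegree := by
  rw [taylor_coeff]
  have h : hasseDeriv p.natDegree p = C (p.coeff p.natDegree) := by
    ext n
    rw [hasseDeriv_coeff]
    cases n with
    | zero => simp
    | succ m =>
        rw [coeff_C, if_neg (Nat.succ_ne_zero m),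
          coeff_eq_zero_of_natDegree_lt (by omega), mul_zero]
  rw [h, eval_C]

private lemma taylor_sub_self (c : K) (p : K[X]) :
    p - taylor c p = 0 ∨ (p - taylor c p).natDegree < p.natDegree := by
  by_cases h0 : p.natDegree = 0
  · left
    obtain ⟨a, rfl⟩ : ∃ a, p = C a := ⟨p.coeff 0, eq_C_of_natDegree_le_zero (le_of_eq h0)⟩
    rw [taylor_C, sub_self]
  · right
    rw [← neg_sub, natDegree_neg]
    have h : (taylor c p - p).natDegree ≤ p.natDegree - 1 := by
      apply natDegree_le_iff_coeff_eq_zero.mpr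
      intro N hN
      have hN' : p.natDegree ≤ N := by omega
      rw [coeff_sub]
      rcases eq_or_lt_of_le hN' with h | h
      · rw [← h, taylor_coeff_natDegree', sub_self]
      · rw [coeff_eq_zero_of_natDegree_lt (by rwa [natDegree_taylor]),
          coeff_eq_zero_of_natDegree_lt h, sub_self]
    omega

private lemma D_comb {r1 r2 s g : K[X]} (h1 : r1 - taylor 1 r1 = s)
    (h2 : r2 - taylor 1 r2 = g) (c : K) :
    (r1 + c • r2) - taylor 1 (r1 + c • r2) = s + c • g := by
  rw [map_add, map_smul, ← h1, ← h2]
  simp only [smul_eq_C_mul]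
  ring

private lemma D_surj_aux [CharZero K] :
    ∀ n : ℕ, ∀ p : K[X], p.natDegree ≤ n → ∃ r : K[X], r - taylor 1 r = p
  | 0, p, hp => by
    refine ⟨-(p.coeff 0 • X), ?_⟩
    rw [map_neg, map_smul, taylor_X, sub_neg_eq_add, smul_add, neg_add_cancel_left,
      Polynomial.smul_C, smul_eq_mul, mul_one]
    exact (eq_C_of_natDegree_le_zero hp).symm
  | (n + 1), p, hp => by
    -- g' := taylor 1 (qq 1 (n+2)) has the wrong degree; we use taylor 1 (qq 1 (n+1))
    set g' : K[X] := taylor 1 (qq 1 (n + 1)) with hg'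
    have hne : ((n : K) + 1 + 1) ≠ 0 := by
      have : ((n : K) + 1 + 1) = ((n + 2 : ℕ) : K) := by push_cast; ring
      rw [this]
      exact_mod_cast Nat.succ_ne_zero (n + 1)
    have hgrange : ∃ r : K[X], r - taylor 1 r = g' := by
      refine ⟨-((((n : K) + 1 + 1))⁻¹ • qq 1 (n + 1 + 1)), ?_⟩
      have hq := taylor_qq_sub (1 : K) (n + 1)
      push_cast [mul_one] at hq
      rw [map_neg, map_smul, neg_sub_neg, ← smul_sub, hq, smul_smul,
        inv_mul_cancel₀ hne, one_smul]
    have hg'm : g'.Monic := by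
      rw [hg', taylor_qq]
      exact monic_prod_of_monic _ _ fun i _ => monic_X_add_C _
    have hg'd : g'.natDegree = n + 1 := by rw [hg', natDegree_taylor, qq_natDegree]
    set c := p.coeff (n + 1) with hc
    have hs : (p - c • g').natDegree ≤ n := by
      apply natDegree_le_iff_coeff_eq_zero.mpr
      intro N hN
      rw [coeff_sub, coeff_smul, smul_eq_mul]
      rcases eq_or_lt_of_le (Nat.succ_le_of_lt hN) with h | h
      · rw [← h]
        have : g'.coeff (n + 1) = 1 := by
          have := hg'm.coeff_natDegree
          rwa [hg'd] at this
        rw [this, mul_one, hc, sub_self]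
      · rw [coeff_eq_zero_of_natDegree_lt (lt_of_le_of_lt hp h),
          coeff_eq_zero_of_natDegree_lt (by omega), mul_zero, sub_zero]
    obtain ⟨r1, hr1⟩ := D_surj_aux n (p - c • g') hs
    obtain ⟨r2, hr2⟩ := hgrange
    refine ⟨r1 + c • r2, ?_⟩
    rw [D_comb hr1 hr2 c]
    exact sub_add_cancel p (c • g')

private lemma D_surj [CharZero K] (p : K[X]) : ∃ r : K[X], r - taylor 1 r = p :=
  D_surj_aux p.natDegree p le_rfl

end PolyAux

section Grp
open Polynomial
variable {K : Type} [Field K]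

private noncomputable def pr : A2 K →ₐ[K] Polynomial K :=
  FreeAlgebra.lift K (fun i => if i = 0 then 0 else Polynomial.X)

private noncomputable def jj : Polynomial K →ₐ[K] A2 K := Polynomial.aeval (ι K 1)

private lemma pr_y : pr (ι K 1 : A2 K) = (X : K[X]) := by
  rw [pr, FreeAlgebra.lift_ι_apply]
  norm_num

private lemma pr_jj (p : K[X]) : pr (jj p : A2 K) = p := by
  rw [jj, ← Polynomial.aeval_algHom_apply, pr_y, Polynomial.aeval_X_left_apply]

private lemma jj_mem (p : K[X]) : (jj p : A2 K) ∈ Algebra.adjoin K ({ι K 1} : Set (A2 K)) := by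
  rw [Algebra.adjoin_singleton_eq_range_aeval]
  exact ⟨p, rfl⟩

private lemma jj_pr {u : A2 K} (hu : u ∈ Algebra.adjoin K ({ι K 1} : Set (A2 K))) :
    jj (pr u) = u := by
  induction hu using Algebra.adjoin_induction with
  | mem v hv =>
      rcases hv with rfl
      rw [pr_y, jj, Polynomial.aeval_X]
  | algebraMap r => rw [AlgHom.commutes, AlgHom.commutes]
  | add u v _ _ hu hv => rw [map_add, map_add, hu, hv]
  | mul u v _ _ hu hv => rw [map_mul, map_mul, hu, hv]

private noncomputable def Phi (p : K[X]) (b : K) : A2 K →ₐ[K] A2 K :=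
  FreeAlgebra.lift K (fun i => if i = 0 then ι K 0 + jj p else ι K 1 + algebraMap K (A2 K) b)

private lemma Phi_x (p : K[X]) (b : K) : Phi p b (ι K 0) = ι K 0 + jj p := by
  rw [Phi, FreeAlgebra.lift_ι_apply]
  norm_num

private lemma Phi_y (p : K[X]) (b : K) :
    Phi p b (ι K 1) = ι K 1 + algebraMap K (A2 K) b := by
  rw [Phi, FreeAlgebra.lift_ι_apply]
  norm_num

private lemma Phi_jj (p : K[X]) (b : K) (q : K[X]) :
    Phi p b (jj q) = jj (taylor b q) := by
  rw [jj, ← Polynomial.aeval_algHom_apply, Phi_y, taylor_apply, Polynomial.aeval_comp]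
  congr 1
  rw [map_add, Polynomial.aeval_X, Polynomial.aeval_C]

private lemma Phi_comp (p : K[X]) (b : K) (q : K[X]) (c : K) :
    (Phi p b).comp (Phi q c) = Phi (p + taylor b q) (b + c) := by
  apply FreeAlgebra.hom_ext
  funext i
  simp only [Function.comp_apply, AlgHom.coe_comp]
  fin_cases i
  · show Phi p b (Phi q c (ι K 0)) = Phi (p + taylor b q) (b + c) (ι K 0)
    rw [Phi_x, map_add, Phi_x, Phi_jj, Phi_x, map_add, add_assoc]
  · show Phi p b (Phi q c (ι K 1)) = Phi (p + taylor b q) (b + c) (ι K 1)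
    rw [Phi_y, map_add, Phi_y, AlgHom.commutes, Phi_y, map_add, add_assoc]

private lemma Phi_id : Phi (0 : K[X]) (0 : K) = AlgHom.id K (A2 K) := by
  apply FreeAlgebra.hom_ext
  funext i
  simp only [Function.comp_apply, AlgHom.coe_comp]
  fin_cases i
  · show Phi (0 : K[X]) (0 : K) (ι K 0) = AlgHom.id K (A2 K) (ι K 0)
    rw [Phi_x, map_zero, add_zero, AlgHom.id_apply]
  · show Phi (0 : K[X]) (0 : K) (ι K 1) = AlgHom.id K (A2 K) (ι K 1)
    rw [Phi_y, map_zero, add_zero, AlgHom.id_apply]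

private noncomputable def EE (p : K[X]) (b : K) : A2 K ≃ₐ[K] A2 K :=
  AlgEquiv.ofAlgHom (Phi p b) (Phi (-(taylor (-b) p)) (-b))
    (by
      rw [Phi_comp, map_neg, taylor_taylor, add_neg_cancel, taylor_zero, add_neg_cancel]
      exact Phi_id)
    (by
      rw [Phi_comp, neg_add_cancel, neg_add_cancel]
      exact Phi_id)

private lemma EE_apply (p : K[X]) (b : K) (u : A2 K) : EE p b u = Phi p b u := rfl

private lemma EE_mem (p : K[X]) (b : K) : EE p b ∈ U2 K :=
  ⟨jj p, jj_mem p, b, Phi_x p b, Phi_y p b⟩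

private noncomputable def ee (p : K[X]) (b : K) : ↥(U2 K) := ⟨EE p b, EE_mem p b⟩

private lemma ee_coe_apply (p : K[X]) (b : K) (u : A2 K) :
    ((ee p b : ↥(U2 K)) : A2 K ≃ₐ[K] A2 K) u = Phi p b u := rfl

private lemma ee_congr {p q : K[X]} {b c : K} (h1 : p = q) (h2 : b = c) :
    (ee p b : ↥(U2 K)) = ee q c := by rw [h1, h2]

private lemma ee_mul (p : K[X]) (b : K) (q : K[X]) (c : K) :
    (ee p b : ↥(U2 K)) * ee q c = ee (p + taylor b q) (b + c) := by
  refine Subtype.ext (AlgEquiv.ext fun u => ?_)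
  have h := AlgHom.congr_fun (Phi_comp p b q c) u
  simp only [AlgHom.coe_comp, Function.comp_apply] at h
  show (EE p b * EE q c) u = EE (p + taylor b q) (b + c) u
  rw [AlgEquiv.mul_apply]
  exact h

private lemma ee_one : (ee 0 0 : ↥(U2 K)) = 1 := by
  refine Subtype.ext (AlgEquiv.ext fun u => ?_)
  have h := AlgHom.congr_fun (Phi_id (K := K)) u
  exact h

private lemma ee_inv (p : K[X]) (b : K) :
    (ee p b : ↥(U2 K))⁻¹ = ee (-(taylor (-b) p)) (-b) := by
  apply inv_eq_of_mul_eq_one_right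
  rw [ee_mul, map_neg, taylor_taylor, add_neg_cancel, taylor_zero, add_neg_cancel, ee_one]

private lemma ee_inj {p q : K[X]} {b c : K} (h : (ee p b : ↥(U2 K)) = ee q c) :
    p = q ∧ b = c := by
  have h1 := congrArg (fun ψ : ↥(U2 K) => ((ψ : A2 K ≃ₐ[K] A2 K)) (ι K 0)) h
  have h2 := congrArg (fun ψ : ↥(U2 K) => ((ψ : A2 K ≃ₐ[K] A2 K)) (ι K 1)) h
  simp only [ee_coe_apply, Phi_x, Phi_y] at h1 h2
  constructor
  · have h3 : (jj p : A2 K) = jj q := add_left_cancel h1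
    have h4 := congrArg pr h3
    rwa [pr_jj, pr_jj] at h4
  · exact FreeAlgebra.algebraMap_leftInverse.injective (add_left_cancel h2)

private lemma ee_surj (φ : ↥(U2 K)) : ∃ p b, φ = ee p b := by
  obtain ⟨f, hf, b, hx, hy⟩ := φ.2
  refine ⟨pr f, b, ?_⟩
  apply Subtype.ext
  apply AlgEquiv.coe_algHom_injective
  apply FreeAlgebra.hom_ext
  funext i
  simp only [Function.comp_apply, AlgHom.coe_coe]
  fin_cases i
  · show (φ : A2 K ≃ₐ[K] A2 K) (ι K 0) = EE (pr f) b (ι K 0)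
    rw [hx, EE_apply, Phi_x, jj_pr hf]
  · show (φ : A2 K ≃ₐ[K] A2 K) (ι K 1) = EE (pr f) b (ι K 1)
    rw [hy, EE_apply, Phi_y]

private lemma ee_comm (p : K[X]) (b : K) (q : K[X]) (c : K) :
    ⁅(ee p b : ↥(U2 K)), ee q c⁆ = ee (p - taylor c p + (taylor b q - q)) 0 := by
  rw [commutatorElement_def, ee_inv, ee_inv, ee_mul, ee_mul, ee_mul]
  apply ee_congr
  · rw [map_neg, map_neg, taylor_taylor, taylor_taylor]
    have e1 : b + c + -b = c := by ring
    rw [e1]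
    have e2 : c + -c = 0 := by ring
    rw [e2, taylor_zero]
    ring
  · ring

/-- The subgroup of elements fixing y. -/
private def NN (K : Type) [Field K] : Subgroup ↥(U2 K) where
  carrier := {φ | (φ : A2 K ≃ₐ[K] A2 K) (ι K 1) = ι K 1}
  one_mem' := rfl
  mul_mem' := by
    intro a b ha hb
    show ((a * b : ↥(U2 K)) : A2 K ≃ₐ[K] A2 K) (ι K 1) = ι K 1
    have : ((a * b : ↥(U2 K)) : A2 K ≃ₐ[K] A2 K) (ι K 1)
        = (a : A2 K ≃ₐ[K] A2 K) ((b : A2 K ≃ₐ[K] A2 K) (ι K 1)) := rfl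
    rw [this, hb, ha]
  inv_mem' := by
    intro a ha
    show ((a⁻¹ : ↥(U2 K)) : A2 K ≃ₐ[K] A2 K) (ι K 1) = ι K 1
    have h2 : ((a⁻¹ : ↥(U2 K)) : A2 K ≃ₐ[K] A2 K) (ι K 1)
        = (a : A2 K ≃ₐ[K] A2 K).symm (ι K 1) := rfl
    rw [h2]
    conv_lhs => rw [← ha]
    exact AlgEquiv.symm_apply_apply _ _

private lemma fixY_of_comm {φ : ↥(U2 K)} (h : φ ∈ commutator ↥(U2 K)) :
    (φ : A2 K ≃ₐ[K] A2 K) (ι K 1) = ι K 1 := by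
  have hle : commutator ↥(U2 K) ≤ NN K := by
    rw [commutator_def]
    refine Subgroup.commutator_le.mpr fun g _ h _ => ?_
    obtain ⟨p, b, rfl⟩ := ee_surj g
    obtain ⟨q, c, rfl⟩ := ee_surj h
    rw [ee_comm]
    show Phi _ 0 (ι K 1) = ι K 1
    rw [Phi_y, map_zero, add_zero]
  exact hle h

private lemma b_eq_zero {p : K[X]} {b : K}
    (h : ((ee p b : ↥(U2 K)) : A2 K ≃ₐ[K] A2 K) (ι K 1) = ι K 1) : b = 0 := by
  rw [ee_coe_apply, Phi_y] at h
  have h2 : algebraMap K (A2 K) b = 0 :=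
    add_left_cancel (h.trans (add_zero (ι K 1)).symm)
  exact (FreeAlgebra.algebraMap_eq_zero_iff b).mp h2

private lemma mem_comm_of_fixY [CharZero K] {φ : ↥(U2 K)}
    (h : (φ : A2 K ≃ₐ[K] A2 K) (ι K 1) = ι K 1) : φ ∈ commutator ↥(U2 K) := by
  obtain ⟨p, b, rfl⟩ := ee_surj φ
  have hb : b = 0 := b_eq_zero h
  subst hb
  obtain ⟨r, hr⟩ := D_surj (K := K) p
  have key : ⁅(ee r 0 : ↥(U2 K)), ee 0 1⁆ = ee p 0 := by
    rw [ee_comm]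
    apply ee_congr _ rfl
    rw [map_zero, sub_zero, add_zero]
    exact hr
  rw [← key, commutator_def]
  exact Subgroup.commutator_mem_commutator (Subgroup.mem_top _) (Subgroup.mem_top _)

end Grp


private lemma Z_of_small {K : Type} [Field K] [CharZero K] :
    ∀ k : ℕ, ∀ p : Polynomial K, (p = 0 ∨ p.natDegree < k) →
      (ee p 0 : ↥(U2 K)) ∈ upperCentralSeries ↥(U2 K) k
  | 0, p, hp => by
    rcases hp with rfl | h
    · rw [ee_one]; exact Subgroup.one_mem _
    · omega
  | (k + 1), p, hp => by
    rw [upperCentralSeries, Subgroup.mem_upperCentralSeries_succ_iff]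
    intro ψ
    obtain ⟨q, c, rfl⟩ := ee_surj ψ
    rw [ee_comm, Polynomial.taylor_zero, sub_self, add_zero]
    apply Z_of_small k
    rcases hp with rfl | h
    · left; rw [map_zero, sub_zero]
    · rcases taylor_sub_self c p with h0 | hd
      · left; exact h0
      · right; omega

private lemma dOp_zero_of_Z {K : Type} [Field K] [CharZero K] (b : K) :
    ∀ k : ℕ, ∀ r : Polynomial K,
      (ee r 0 : ↥(U2 K)) ∈ upperCentralSeries ↥(U2 K) k → ((dOp b) ^ k) r = 0
  | 0, r, hr => by
    rw [upperCentralSeries, Subgroup.upperCentralSeries_zero, Subgroup.mem_bot, ← ee_one] at hr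
    have h0 := (ee_inj hr).1
    rw [pow_zero, Module.End.one_apply]
    exact h0
  | (k + 1), r, hr => by
    rw [upperCentralSeries, Subgroup.mem_upperCentralSeries_succ_iff] at hr
    have h1 := hr (ee 0 b)
    rw [ee_comm] at h1
    have harg : r - Polynomial.taylor b r +
        ((Polynomial.taylor (0 : K)) (0 : Polynomial K) - 0) = -((dOp b) r) := by
      rw [map_zero, sub_zero, add_zero, dOp_apply, neg_sub]
    rw [harg] at h1
    have h2 := dOp_zero_of_Z b k _ h1
    rw [map_neg, neg_eq_zero] at h2
    rw [pow_succ, Module.End.mul_apply]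
    exact h2

private lemma b_zero_of_Z {K : Type} [Field K] [CharZero K] {p : Polynomial K} {b : K} {k : ℕ}
    (h : (ee p b : ↥(U2 K)) ∈ upperCentralSeries ↥(U2 K) k) : b = 0 := by
  by_contra hb
  cases k with
  | zero =>
      rw [upperCentralSeries, Subgroup.upperCentralSeries_zero, Subgroup.mem_bot, ← ee_one] at h
      exact hb (ee_inj h).2
  | succ m =>
      rw [upperCentralSeries, Subgroup.mem_upperCentralSeries_succ_iff] at h
      have h1 := h (ee (qq b (m + 1)) 0)
      rw [ee_comm] at h1
      have harg : p - Polynomial.taylor (0 : K) p +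
          (Polynomial.taylor b (qq b (m + 1)) - qq b (m + 1)) = (dOp b) (qq b (m + 1)) := by
        rw [Polynomial.taylor_zero, sub_self, zero_add, dOp_apply]
      rw [harg] at h1
      have h2 := dOp_zero_of_Z b m _ h1
      have h3 : ((dOp b) ^ (m + 1)) (qq b (m + 1)) = 0 := by
        rw [pow_succ, Module.End.mul_apply]
        exact h2
      exact dOp_pow_qq_ne_zero hb (m + 1) h3

private lemma fixY_of_Z {K : Type} [Field K] [CharZero K] {φ : ↥(U2 K)} {k : ℕ}
    (h : φ ∈ upperCentralSeries ↥(U2 K) k) :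
    (φ : A2 K ≃ₐ[K] A2 K) (ι K 1) = ι K 1 := by
  obtain ⟨p, b, rfl⟩ := ee_surj φ
  have hb := b_zero_of_Z h
  subst hb
  rw [ee_coe_apply, Phi_y, map_zero, add_zero]

private lemma exZ_of_fixY {K : Type} [Field K] [CharZero K] {φ : ↥(U2 K)}
    (h : (φ : A2 K ≃ₐ[K] A2 K) (ι K 1) = ι K 1) :
    ∃ k, φ ∈ upperCentralSeries ↥(U2 K) k := by
  obtain ⟨p, b, rfl⟩ := ee_surj φ
  have hb := b_eq_zero h
  subst hb
  exact ⟨p.natDegree + 1, Z_of_small _ p (Or.inr (Nat.lt_succ_self _))⟩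

theorem Z_omega_U2 (K : Type) [Field K] [CharZero K] (φ : U2 K) :
    ((∃ k : ℕ, φ ∈ upperCentralSeries ↥(U2 K) k) ↔ φ ∈ commutator ↥(U2 K)) ∧
    (φ ∈ commutator ↥(U2 K) ↔
      ∃ f ∈ Algebra.adjoin K ({ι K 1} : Set (A2 K)),
        (φ : A2 K ≃ₐ[K] A2 K) (ι K 0) = ι K 0 + f ∧
        (φ : A2 K ≃ₐ[K] A2 K) (ι K 1) = ι K 1) := by
  constructor
  · constructor
    · rintro ⟨k, hk⟩
      exact mem_comm_of_fixY (fixY_of_Z hk)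
    · intro h
      exact exZ_of_fixY (fixY_of_comm h)
  · constructor
    · intro h
      have hy := fixY_of_comm h
      obtain ⟨f, hf, b, hx, hy'⟩ := φ.2
      exact ⟨f, hf, hx, hy⟩
    · rintro ⟨f, hf, hx, hy⟩
      exact mem_comm_of_fixY hy
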